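/- Suppose W₂(X,Y,Z,W) = 0 for all X,Y,Z,W ∈ V. Then the Ricci tensor satisfies S(Y,Z) = (r/n) g(Y,Z) for all Y,Z ∈ V. -/

import Mathlib

open scoped RealInnerProductSpace

theorem stmt6
    {V : Type*} [NormedAddCommGroup V] [InnerProductSpace ℝ V]
    (n : ℕ) (hn : 3 < n)
    (e : Module.Basis (Fin n) ℝ V) (he : Orthonormal ℝ e)
    (Rb : V → V → V → V → ℝ)
    (hlin1 : ∀ (c : ℝ) (X X' Y Z W : V),
      Rb (c • X + X') Y Z W = c * Rb X Y Z W + Rb X' Y Z W)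
    (hlin2 : ∀ (c : ℝ) (X Y Y' Z W : V),
      Rb X (c • Y + Y') Z W = c * Rb X Y Z W + Rb X Y' Z W)
    (hlin3 : ∀ (c : ℝ) (X Y Z Z' W : V),
      Rb X Y (c • Z + Z') W = c * Rb X Y Z W + Rb X Y Z' W)
    (hlin4 : ∀ (c : ℝ) (X Y Z W W' : V),
      Rb X Y Z (c • W + W') = c * Rb X Y Z W + Rb X Y Z W')
    (hskew1 : ∀ X Y Z W : V, Rb X Y Z W = - Rb Y X Z W)
    (hskew2 : ∀ X Y Z W : V, Rb X Y Z W = - Rb X Y W Z)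
    (hpair : ∀ X Y Z W : V, Rb X Y Z W = Rb Z W X Y)
    (S : V → V → ℝ) (hS : ∀ Y Z : V, S Y Z = ∑ i, Rb (e i) Y Z (e i))
    (r : ℝ) (hr : r = ∑ i, S (e i) (e i))
    (W2 : V → V → V → V → ℝ)
    (hW : ∀ X Y Z W : V, W2 X Y Z W =
      Rb X Y Z W
      + (1 / ((n : ℝ) - 1)) * (⟪X, Z⟫ * S Y W - ⟪Y, Z⟫ * S X W))
    (hflat : ∀ X Y Z W : V, W2 X Y Z W = 0) :
    ∀ Y Z : V, S Y Z = (r / n) * ⟪Y, Z⟫ := by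
  have hn0 : (n : ℝ) ≠ 0 := by positivity
  have hn1 : (n : ℝ) - 1 ≠ 0 := by
    have : (3 : ℝ) < n := by exact_mod_cast hn
    linarith
  -- Rb vanishes when third slot is 0
  have h0 : ∀ X Y W : V, Rb X Y 0 W = 0 := by
    intro X Y W
    have := hlin3 1 X Y 0 0 W
    simp at this
    linarith
  -- additivity in third slot
  have hadd : ∀ X Y Z Z' W : V, Rb X Y (Z + Z') W = Rb X Y Z W + Rb X Y Z' W := by
    intro X Y Z Z' W
    have := hlin3 1 X Y Z Z' W
    simpa using this
  have hsmul : ∀ (c : ℝ) (X Y Z W : V), Rb X Y (c • Z) W = c * Rb X Y Z W := by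
    intro c X Y Z W
    have := hlin3 c X Y Z 0 W
    rw [add_zero, h0] at this
    linarith
  -- sum linearity
  have hsum : ∀ (X Y W : V) (f : Fin n → ℝ),
      Rb X Y (∑ j, f j • e j) W = ∑ j, f j * Rb X Y (e j) W := by
    intro X Y W f
    classical
    induction (Finset.univ : Finset (Fin n)) using Finset.induction with
    | empty => simpa using h0 X Y W
    | insert _ _ h ih =>
      rw [Finset.sum_insert h, Finset.sum_insert h, hadd, hsmul, ih]
  -- expand Z in the basis
  have hrepr : ∀ Z : V, Z = ∑ j, ⟪e j, Z⟫ • e j := by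
    intro Z
    conv_lhs => rw [← e.sum_repr Z]
    refine Finset.sum_congr rfl fun j _ => ?_
    congr 1
    rw [← he.inner_right_fintype (e.repr Z)]
    congr 1
    exact (e.sum_repr Z)
  -- contraction identity
  have hcontr : ∀ Y Z : V, ∑ j, ⟪e j, Z⟫ * S Y (e j) = S Y Z := by
    intro Y Z
    rw [hS Y Z]
    conv_rhs => rw [hrepr Z]
    simp_rw [hsum]
    rw [Finset.sum_comm]
    refine Finset.sum_congr rfl fun j _ => ?_
    rw [hS, Finset.mul_sum]
  intro Y Z
  have key : ∀ X W : V, Rb X Y Z W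
      = -(1 / ((n : ℝ) - 1)) * (⟪X, Z⟫ * S Y W - ⟪Y, Z⟫ * S X W) := by
    intro X W
    have := hflat X Y Z W
    rw [hW] at this
    linarith
  have hmain : S Y Z = -(1 / ((n : ℝ) - 1)) * (S Y Z - ⟪Y, Z⟫ * r) := by
    calc S Y Z = ∑ i, Rb (e i) Y Z (e i) := hS Y Z
    _ = ∑ i, -(1 / ((n : ℝ) - 1)) * (⟪e i, Z⟫ * S Y (e i) - ⟪Y, Z⟫ * S (e i) (e i)) := by
        exact Finset.sum_congr rfl fun i _ => key (e i) (e i)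
    _ = -(1 / ((n : ℝ) - 1)) * ((∑ i, ⟪e i, Z⟫ * S Y (e i)) - ⟪Y, Z⟫ * ∑ i, S (e i) (e i)) := by
        rw [← Finset.mul_sum, Finset.sum_sub_distrib, Finset.mul_sum]
    _ = -(1 / ((n : ℝ) - 1)) * (S Y Z - ⟪Y, Z⟫ * r) := by rw [hcontr, hr]
  field_simp at hmain
  field_simp
  linarith
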